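/- Let F(x) = Σ_{t=1}^T (w_l^{(t)} + w_r^{(t)}·𝟙[x_{c_t} ≥ b_t]) be an ensemble of decision stumps on ℝ^d. Then for any x, and for ε ≥ 0, inf over ‖δ‖_∞ ≤ ε of y·F(x+δ) = Σ_t y·w_l^{(t)} + Σ_{k=1}^d inf over |δ_k| ≤ ε of Σ_{t : c_t = k} y·w_r^{(t)}·𝟙[x_k + δ_k ≥ b_t], and all infima are attained. -/

import Mathlib

/-- exact separable computation of the robust margin for stump ensembles,
with all infima attained. -/
theorem stmt_13 {d T : ℕ} (wl wr b : Fin T → ℝ) (c : Fin T → Fin d)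
    (x : Fin d → ℝ) (y ε : ℝ) (hy : y = 1 ∨ y = -1) (hε : 0 ≤ ε) :
    (sInf {z : ℝ | ∃ δ : Fin d → ℝ, ‖δ‖ ≤ ε ∧
        z = y * ∑ t, (wl t + wr t * (if (x + δ) (c t) ≥ b t then (1 : ℝ) else 0))}
      = (∑ t, y * wl t) + ∑ k, sInf {z : ℝ | ∃ δk : ℝ, |δk| ≤ ε ∧
          z = ∑ t ∈ Finset.univ.filter (fun t => c t = k),
              y * wr t * (if x k + δk ≥ b t then (1 : ℝ) else 0)}) ∧
    (∃ δ : Fin d → ℝ, ‖δ‖ ≤ ε ∧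
      y * (∑ t, (wl t + wr t * (if (x + δ) (c t) ≥ b t then (1 : ℝ) else 0)))
        = sInf {z : ℝ | ∃ δ' : Fin d → ℝ, ‖δ'‖ ≤ ε ∧
            z = y * ∑ t, (wl t + wr t * (if (x + δ') (c t) ≥ b t then (1 : ℝ) else 0))}) ∧
    (∀ k : Fin d, ∃ δk : ℝ, |δk| ≤ ε ∧
      (∑ t ∈ Finset.univ.filter (fun t => c t = k),
          y * wr t * (if x k + δk ≥ b t then (1 : ℝ) else 0))
        = sInf {z : ℝ | ∃ δk' : ℝ, |δk'| ≤ ε ∧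
            z = ∑ t ∈ Finset.univ.filter (fun t => c t = k),
                y * wr t * (if x k + δk' ≥ b t then (1 : ℝ) else 0)}) := by
  classical
  set g : Fin d → ℝ → ℝ := fun k δk => ∑ t ∈ Finset.univ.filter (fun t => c t = k),
      y * wr t * (if x k + δk ≥ b t then (1 : ℝ) else 0) with hg
  set S : Fin d → Set ℝ := fun k => {z : ℝ | ∃ δk : ℝ, |δk| ≤ ε ∧ z = g k δk} with hS
  have hSdef : ∀ k : Fin d, {z : ℝ | ∃ δk : ℝ, |δk| ≤ ε ∧
      z = ∑ t ∈ Finset.univ.filter (fun t => c t = k),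
          y * wr t * (if x k + δk ≥ b t then (1 : ℝ) else 0)} = S k := fun k => rfl
  simp only [hSdef]
  set G : Set ℝ := {z : ℝ | ∃ δ : Fin d → ℝ, ‖δ‖ ≤ ε ∧
      z = y * ∑ t, (wl t + wr t * (if (x + δ) (c t) ≥ b t then (1 : ℝ) else 0))} with hG
  -- separability
  have key : ∀ δ : Fin d → ℝ,
      (y * ∑ t, (wl t + wr t * (if (x + δ) (c t) ≥ b t then (1 : ℝ) else 0)))
      = (∑ t, y * wl t) + ∑ k, g k (δ k) := by
    intro δ
    rw [Finset.mul_sum]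
    simp only [mul_add]
    rw [Finset.sum_add_distrib]
    congr 1
    rw [← Finset.sum_fiberwise Finset.univ c
        (fun t => y * (wr t * (if (x + δ) (c t) ≥ b t then (1 : ℝ) else 0)))]
    refine Finset.sum_congr rfl fun k _ => ?_
    refine Finset.sum_congr rfl fun t ht => ?_
    have hct : c t = k := (Finset.mem_filter.mp ht).2
    simp [hct, mul_assoc]
  have hSfin : ∀ k, (S k).Finite := by
    intro k
    apply Set.Finite.subset (Set.finite_range (fun s : Finset (Fin T) => ∑ t ∈ s, y * wr t))
    rintro z ⟨δk, -, rfl⟩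
    refine ⟨Finset.univ.filter (fun t => c t = k ∧ b t ≤ x k + δk), ?_⟩
    simp only [hg]
    rw [← Finset.filter_filter, Finset.sum_filter]
    refine Finset.sum_congr rfl fun t _ => ?_
    by_cases h : b t ≤ x k + δk <;> simp [h, ge_iff_le]
  have hSne : ∀ k, (S k).Nonempty := fun k => ⟨g k 0, 0, by simpa using hε, rfl⟩
  have hgmem : ∀ (k) (δk : ℝ), |δk| ≤ ε → g k δk ∈ S k := fun k δk h => ⟨δk, h, rfl⟩
  have hmin : ∀ k, ∃ δk : ℝ, |δk| ≤ ε ∧ g k δk = sInf (S k) := by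
    intro k
    obtain ⟨δk, h1, h2⟩ := (hSne k).csInf_mem (hSfin k)
    exact ⟨δk, h1, h2.symm⟩
  choose δs hδs1 hδs2 using hmin
  have hnorm : ‖δs‖ ≤ ε := by
    rw [pi_norm_le_iff_of_nonneg hε]
    intro k; rw [Real.norm_eq_abs]; exact hδs1 k
  have hlb : ∀ z ∈ G, (∑ t, y * wl t) + ∑ k, sInf (S k) ≤ z := by
    rintro z ⟨δ, hδ, rfl⟩
    rw [key]
    refine add_le_add le_rfl (Finset.sum_le_sum fun k _ => ?_)
    refine csInf_le (hSfin k).bddBelow (hgmem k (δ k) ?_)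
    calc |δ k| = ‖δ k‖ := (Real.norm_eq_abs _).symm
    _ ≤ ‖δ‖ := norm_le_pi_norm δ k
    _ ≤ ε := hδ
  have hmemG : (y * ∑ t, (wl t + wr t * (if (x + δs) (c t) ≥ b t then (1 : ℝ) else 0))) ∈ G :=
    ⟨δs, hnorm, rfl⟩
  have hvs : (y * ∑ t, (wl t + wr t * (if (x + δs) (c t) ≥ b t then (1 : ℝ) else 0)))
      = (∑ t, y * wl t) + ∑ k, sInf (S k) := by
    rw [key]; exact congrArg _ (Finset.sum_congr rfl fun k _ => hδs2 k)
  have hGne : G.Nonempty := ⟨_, hmemG⟩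
  have hval : sInf G = (∑ t, y * wl t) + ∑ k, sInf (S k) := by
    apply le_antisymm
    · exact hvs ▸ csInf_le ⟨_, hlb⟩ hmemG
    · exact le_csInf hGne hlb
  refine ⟨hval, ⟨δs, hnorm, ?_⟩, fun k => ⟨δs k, hδs1 k, hδs2 k⟩⟩
  rw [hval, hvs]
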